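/- Let f : [a,b] → ℝ be uniformly convex with increasing modulus Φ : [0,b−a] → ℝ₊, Φ(0) = 0. Let x₁ ≤ x₂ ≤ ... ≤ xₙ ∈ [a,b] and p a probability vector. Then ∑_{k=1}^n pₖ f(xₖ) − f(∑pₖxₖ) ≥ ∑_{k=1}^{n−1} pₖ p_{k+1} Φ(x_{k+1} − xₖ). -/

import Mathlib

theorem stmt7_aux {a b : ℝ} (hab : a ≤ b) {f Φ : ℝ → ℝ}
    (hΦpos : ∀ t ∈ Set.Icc 0 (b - a), 0 ≤ Φ t)
    (hΦmono : MonotoneOn Φ (Set.Icc 0 (b - a)))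
    (huc : ∀ x ∈ Set.Icc a b, ∀ y ∈ Set.Icc a b, ∀ t ∈ Set.Icc (0 : ℝ) 1,
      t * f x + (1 - t) * f y ≥ f (t * x + (1 - t) * y) + t * (1 - t) * Φ |x - y|) :
    ∀ n : ℕ, 0 < n → ∀ x : ℕ → ℝ, (∀ i < n, x i ∈ Set.Icc a b) →
      (∀ i j, i ≤ j → j < n → x i ≤ x j) →
      ∀ p : ℕ → ℝ, (∀ i < n, 0 ≤ p i) → (∑ i ∈ Finset.range n, p i = 1) →
      ∑ k ∈ Finset.range n, p k * f (x k) - f (∑ k ∈ Finset.range n, p k * x k) ≥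
        ∑ k ∈ Finset.range (n - 1), p k * p (k + 1) * Φ (x (k + 1) - x k) := by
  intro n
  induction n with
  | zero => intro h; exact absurd h (lt_irrefl 0)
  | succ m ih =>
    intro _ x hx hmono p hp hp1
    rcases Nat.eq_zero_or_pos m with hm | hm
    · subst hm
      rw [Finset.sum_range_one] at hp1
      simp [Finset.sum_range_one, hp1]
    obtain ⟨m', rfl⟩ : ∃ m', m = m' + 1 := ⟨m - 1, by omega⟩
    set m := m' + 1 with hmdef
    set s := ∑ i ∈ Finset.range m, p i with hs
    have hsum : s + p m = 1 := by rw [hs, ← Finset.sum_range_succ]; exact hp1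
    have hs0 : 0 ≤ s :=
      Finset.sum_nonneg fun i hi => hp i (by simpa using Nat.lt_succ_of_lt (Finset.mem_range.mp hi))
    have hpm : 0 ≤ p m := hp m (by omega)
    have hs1 : s ≤ 1 := by linarith
    -- split sums in the goal
    rw [show ∑ k ∈ Finset.range (m + 1), p k * f (x k)
          = (∑ k ∈ Finset.range m, p k * f (x k)) + p m * f (x m) from
        Finset.sum_range_succ _ _,
      show ∑ k ∈ Finset.range (m + 1), p k * x k
          = (∑ k ∈ Finset.range m, p k * x k) + p m * x m from
        Finset.sum_range_succ _ _,
      show ∑ k ∈ Finset.range (m + 1 - 1), p k * p (k + 1) * Φ (x (k + 1) - x k)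
          = (∑ k ∈ Finset.range m', p k * p (k + 1) * Φ (x (k + 1) - x k))
            + p m' * p m * Φ (x m - x m') from Finset.sum_range_succ _ _]
    rcases eq_or_lt_of_le hs0 with hse | hspos
    · -- s = 0 : all early weights vanish
      have hs' : ∑ i ∈ Finset.range m, p i = 0 := by rw [← hs]; exact hse.symm
      have h0 : ∀ i ∈ Finset.range m, p i = 0 :=
        (Finset.sum_eq_zero_iff_of_nonneg
          (fun i hi => hp i (by simpa using Nat.lt_succ_of_lt (Finset.mem_range.mp hi)))).mp hs'
      have hpm1 : p m = 1 := by linarith [hse]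
      have e1 : ∑ k ∈ Finset.range m, p k * f (x k) = 0 :=
        Finset.sum_eq_zero fun i hi => by rw [h0 i hi]; ring
      have e2 : ∑ k ∈ Finset.range m, p k * x k = 0 :=
        Finset.sum_eq_zero fun i hi => by rw [h0 i hi]; ring
      have e3 : ∑ k ∈ Finset.range m', p k * p (k + 1) * Φ (x (k + 1) - x k) = 0 :=
        Finset.sum_eq_zero fun i hi => by
          rw [h0 i (Finset.mem_range.mpr (by have := Finset.mem_range.mp hi; omega))]; ring
      have e4 : p m' = 0 := h0 m' (Finset.mem_range.mpr (by omega))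
      rw [e1, e2, e3, e4, hpm1]
      norm_num
    · -- s > 0
      have hsne : s ≠ 0 := ne_of_gt hspos
      set q : ℕ → ℝ := fun k => p k / s with hq
      have hq0 : ∀ i < m, 0 ≤ q i := fun i hi =>
        div_nonneg (hp i (by omega)) hs0
      have hq1 : ∑ i ∈ Finset.range m, q i = 1 := by
        rw [hq]; rw [← Finset.sum_div, ← hs, div_self hsne]
      set y := ∑ k ∈ Finset.range m, q k * x k with hy
      have hsq : ∀ k, s * q k = p k := fun k => by
        rw [hq]; field_simp
      have hsy : s * y = ∑ k ∈ Finset.range m, p k * x k := by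
        rw [hy, Finset.mul_sum]
        exact Finset.sum_congr rfl fun k _ => by rw [← mul_assoc, hsq]
      -- bounds for y
      have hya : a ≤ y := by
        calc a = ∑ k ∈ Finset.range m, q k * a := by rw [← Finset.sum_mul, hq1, one_mul]
        _ ≤ y := Finset.sum_le_sum fun i hi =>
            mul_le_mul_of_nonneg_left (hx i (by have := Finset.mem_range.mp hi; omega)).1
              (hq0 i (Finset.mem_range.mp hi))
      have hyb : y ≤ b := by
        calc y ≤ ∑ k ∈ Finset.range m, q k * b := Finset.sum_le_sum fun i hi =>
            mul_le_mul_of_nonneg_left (hx i (by have := Finset.mem_range.mp hi; omega)).2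
              (hq0 i (Finset.mem_range.mp hi))
        _ = b := by rw [← Finset.sum_mul, hq1, one_mul]
      have hyx : y ≤ x m' := by
        calc y ≤ ∑ k ∈ Finset.range m, q k * x m' := Finset.sum_le_sum fun i hi =>
            mul_le_mul_of_nonneg_left
              (hmono i m' (by have := Finset.mem_range.mp hi; omega) (by omega))
              (hq0 i (Finset.mem_range.mp hi))
        _ = x m' := by rw [← Finset.sum_mul, hq1, one_mul]
      have hxm : x m ∈ Set.Icc a b := hx m (by omega)
      have hxm'm : x m' ≤ x m := hmono m' m (by omega) (by omega)
      -- uniform convexity between y and x m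
      have key2 := huc y ⟨hya, hyb⟩ (x m) hxm s ⟨hs0, hs1⟩
      have habs : |y - x m| = x m - y := by
        rw [abs_sub_comm, abs_of_nonneg (by linarith)]
      rw [habs] at key2
      have hpm1 : (1 : ℝ) - s = p m := by linarith
      rw [hpm1] at key2
      -- inductive hypothesis for first m points
      have key1 := ih hm x (fun i hi => hx i (by omega))
        (fun i j hij hj => hmono i j hij (by omega)) q hq0 hq1
      rw [← hy] at key1
      have hgr2 : (m - 1) = m' := rfl
      rw [hgr2] at key1
      -- Φ monotone step
      have hxmy0 : (0:ℝ) ≤ x m - x m' := by linarith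
      have hmem1 : x m - x m' ∈ Set.Icc (0:ℝ) (b - a) := ⟨hxmy0, by
        have := (hx m' (by omega)).1; have := hxm.2; linarith⟩
      have hmem2 : x m - y ∈ Set.Icc (0:ℝ) (b - a) := ⟨by linarith, by linarith [hxm.2]⟩
      have hΦle : Φ (x m - x m') ≤ Φ (x m - y) := hΦmono hmem1 hmem2 (by linarith)
      have hΦ1 : 0 ≤ Φ (x m - x m') := hΦpos _ hmem1
      have hpm'le : p m' ≤ s := by
        rw [hs]
        exact Finset.single_le_sum
          (fun i hi => hp i (by have := Finset.mem_range.mp hi; omega))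
          (Finset.mem_range.mpr (by omega))
      have key3 : p m' * p m * Φ (x m - x m') ≤ s * p m * Φ (x m - y) := by
        have hp' : 0 ≤ p m' := hp m' (by omega)
        calc p m' * p m * Φ (x m - x m') ≤ s * p m * Φ (x m - x m') := by
              apply mul_le_mul_of_nonneg_right _ hΦ1
              exact mul_le_mul_of_nonneg_right hpm'le hpm
        _ ≤ s * p m * Φ (x m - y) :=
              mul_le_mul_of_nonneg_left hΦle (mul_nonneg hs0 hpm)
      -- s * (sum over q) dominates sum over p
      have key4 : ∑ k ∈ Finset.range m', p k * p (k + 1) * Φ (x (k + 1) - x k) ≤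
          s * ∑ k ∈ Finset.range m', q k * q (k + 1) * Φ (x (k + 1) - x k) := by
        rw [Finset.mul_sum]
        apply Finset.sum_le_sum
        intro i hi
        have him : i < m' := Finset.mem_range.mp hi
        have hΦi : 0 ≤ Φ (x (i + 1) - x i) := by
          apply hΦpos
          constructor
          · linarith [hmono i (i+1) (by omega) (by omega)]
          · have h1 := (hx i (by omega)).1
            have h2 := (hx (i+1) (by omega)).2
            linarith
        have hpi : 0 ≤ p i := hp i (by omega)
        have hpi1 : 0 ≤ p (i + 1) := hp (i+1) (by omega)
        have : s * (q i * q (i + 1) * Φ (x (i + 1) - x i)) =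
            p i * p (i + 1) * Φ (x (i + 1) - x i) / s := by
          rw [hq]; field_simp
        rw [this, le_div_iff₀ hspos]
        have h := mul_nonneg (mul_nonneg hpi hpi1) hΦi
        nlinarith [mul_le_mul_of_nonneg_left hs1 h]
      have key5 : ∑ k ∈ Finset.range m, p k * f (x k) =
          s * ∑ k ∈ Finset.range m, q k * f (x k) := by
        rw [Finset.mul_sum]
        exact Finset.sum_congr rfl fun k _ => by rw [← mul_assoc, hsq]
      have key1' : s * ∑ k ∈ Finset.range m', q k * q (k + 1) * Φ (x (k + 1) - x k) ≤
          s * (∑ k ∈ Finset.range m, q k * f (x k) - f y) :=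
        mul_le_mul_of_nonneg_left key1 hs0
      rw [hsy] at key2
      rw [key5]
      rw [mul_sub] at key1'
      nlinarith [key1', key2, key3, key4]

theorem stmt7 {a b : ℝ} (hab : a ≤ b) {f Φ : ℝ → ℝ}
    (hΦ0 : Φ 0 = 0) (hΦpos : ∀ t ∈ Set.Icc 0 (b - a), 0 ≤ Φ t)
    (hΦmono : MonotoneOn Φ (Set.Icc 0 (b - a)))
    (huc : ∀ x ∈ Set.Icc a b, ∀ y ∈ Set.Icc a b, ∀ t ∈ Set.Icc (0 : ℝ) 1,
      t * f x + (1 - t) * f y ≥ f (t * x + (1 - t) * y) + t * (1 - t) * Φ |x - y|)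
    {n : ℕ} (hn : 0 < n) (x : ℕ → ℝ) (hx : ∀ i < n, x i ∈ Set.Icc a b)
    (hmono : ∀ i j, i ≤ j → j < n → x i ≤ x j)
    (p : ℕ → ℝ) (hp : ∀ i < n, 0 ≤ p i) (hp1 : ∑ i ∈ Finset.range n, p i = 1) :
    ∑ k ∈ Finset.range n, p k * f (x k) - f (∑ k ∈ Finset.range n, p k * x k) ≥
      ∑ k ∈ Finset.range (n - 1), p k * p (k + 1) * Φ (x (k + 1) - x k) := by
  exact stmt7_aux hab hΦpos hΦmono huc n hn x hx hmono p hp hp1
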